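/- Let $p > 1/2$ and define the normalized Whittle–Matérn function $M_p(r) = \frac{r^p K_p(r)}{2^{p-1}\Gamma(p)}$ for $r>0$, with $M_p(0)=1$, where $K_p$ is the modified Bessel function of the second kind. Then $M_p$ is not completely monotone on $(0,\infty)$. -/

import Mathlib

open Set MeasureTheory Real Filter Topology

noncomputable def besselK (p z : ℝ) : ℝ :=
  ∫ r in Set.Ioi (0 : ℝ), Real.exp (-z * Real.cosh r) * Real.cosh (p * r)

lemma cosh_le_exp_abs (x : ℝ) : Real.cosh x ≤ Real.exp |x| := by
  rw [Real.cosh_eq]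
  have h1 : Real.exp x ≤ Real.exp |x| := Real.exp_le_exp.2 (le_abs_self x)
  have h2 : Real.exp (-x) ≤ Real.exp |x| := Real.exp_le_exp.2 (neg_le_abs x)
  linarith

lemma abs_sinh_le_exp_abs (x : ℝ) : |Real.sinh x| ≤ Real.exp |x| := by
  rw [Real.abs_sinh]
  calc Real.sinh |x| ≤ Real.cosh |x| := (Real.sinh_lt_cosh |x|).le
    _ ≤ Real.exp |x| := by rw [Real.cosh_abs]; exact cosh_le_exp_abs x

lemma half_exp_le_cosh {x : ℝ} : Real.exp x / 2 ≤ Real.cosh x := by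
  rw [Real.cosh_eq]
  have := (Real.exp_pos (-x)).le
  linarith

/-- master decay bound: for z > 0, m ∈ ℕ, r real,
  exp (-z cosh r) ≤ m! * (z/2)⁻ᵐ * exp (-m r). -/
lemma exp_neg_cosh_le {z : ℝ} (hz : 0 < z) (m : ℕ) (r : ℝ) :
    Real.exp (-z * Real.cosh r) ≤ m.factorial * ((z/2) ^ m)⁻¹ * Real.exp (-(m:ℝ) * r) := by
  have h1 : ((z/2) * Real.exp r) ^ m / m.factorial ≤ Real.exp ((z/2) * Real.exp r) :=
    Real.pow_div_factorial_le_exp _ (by positivity) m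
  have h2 : Real.exp ((z/2) * Real.exp r) ≤ Real.exp (z * Real.cosh r) := by
    apply Real.exp_le_exp.2
    have := half_exp_le_cosh (x := r)
    calc z/2 * Real.exp r = z * (Real.exp r / 2) := by ring
      _ ≤ z * Real.cosh r := by nlinarith
  have hfac : (0:ℝ) < m.factorial := by exact_mod_cast m.factorial_pos
  have key : (z/2)^m * Real.exp ((m:ℝ)*r) ≤ m.factorial * Real.exp (z * Real.cosh r) := by
    have hmp : ((z/2) * Real.exp r) ^ m = (z/2)^m * Real.exp ((m:ℝ)*r) := by
      rw [mul_pow, ← Real.exp_nat_mul]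
    have h3 := h1.trans h2
    rw [hmp, div_le_iff₀ hfac] at h3
    linarith
  have hA : (0:ℝ) < (z/2)^m * Real.exp ((m:ℝ)*r) := by positivity
  have hrhs : (m.factorial:ℝ) * ((z/2)^m)⁻¹ * Real.exp (-(m:ℝ)*r) =
      m.factorial / ((z/2)^m * Real.exp ((m:ℝ)*r)) := by
    rw [neg_mul, Real.exp_neg]; field_simp
  rw [hrhs, neg_mul, Real.exp_neg, inv_eq_one_div, div_le_div_iff₀ (Real.exp_pos _) hA]
  calc 1 * ((z/2)^m * Real.exp ((m:ℝ)*r)) = (z/2)^m * Real.exp ((m:ℝ)*r) := one_mul _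
    _ ≤ m.factorial * Real.exp (z * Real.cosh r) := key

/-- Master integrability: `exp (-z cosh r) * exp (a r)` is integrable on `(0,∞)` for `z>0`. -/
lemma integrable_exp_cosh_exp {z : ℝ} (hz : 0 < z) (a : ℝ) :
    IntegrableOn (fun r => Real.exp (-z * Real.cosh r) * Real.exp (a * r)) (Ioi (0:ℝ)) := by
  obtain ⟨m, hm⟩ := exists_nat_gt a
  set C : ℝ := m.factorial * ((z/2) ^ m)⁻¹ with hC
  have hCpos : 0 < C := by positivity
  have hbound : ∀ r : ℝ, ‖Real.exp (-z * Real.cosh r) * Real.exp (a * r)‖ ≤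
      C * Real.exp (-((m:ℝ) - a) * r) := fun r => by
    rw [Real.norm_eq_abs, abs_of_nonneg (by positivity)]
    calc Real.exp (-z * Real.cosh r) * Real.exp (a * r)
        ≤ (C * Real.exp (-(m:ℝ) * r)) * Real.exp (a * r) := by
          apply mul_le_mul_of_nonneg_right (exp_neg_cosh_le hz m r) (Real.exp_pos _).le
      _ = C * Real.exp (-((m:ℝ) - a) * r) := by
          rw [mul_assoc, ← Real.exp_add]; ring_nf
  have hint : IntegrableOn (fun r => C * Real.exp (-((m:ℝ) - a) * r)) (Ioi (0:ℝ)) :=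
    (exp_neg_integrableOn_Ioi 0 (by linarith)).const_mul C
  refine hint.mono' (Continuous.aestronglyMeasurable (by continuity)) ?_
  exact Filter.Eventually.of_forall (fun r => hbound r)

/-- Integrability of `exp (-z cosh r) * f r` for continuous `f` with `|f r| ≤ exp (a r)` on `r ≥ 0`. -/
lemma integrable_exp_cosh_mul {z : ℝ} (hz : 0 < z) {f : ℝ → ℝ} (hf : Continuous f) (a : ℝ)
    (hb : ∀ r, 0 ≤ r → |f r| ≤ Real.exp (a * r)) :
    IntegrableOn (fun r => Real.exp (-z * Real.cosh r) * f r) (Ioi (0:ℝ)) := by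
  refine (integrable_exp_cosh_exp hz a).mono' (Continuous.aestronglyMeasurable (by fun_prop)) ?_
  filter_upwards [ae_restrict_mem measurableSet_Ioi] with r hr
  rw [Real.norm_eq_abs, abs_mul, abs_of_nonneg (Real.exp_pos _).le]
  have := hb r (le_of_lt hr)
  have h2 : Real.exp (-z * Real.cosh r) * |f r| ≤ Real.exp (-z*Real.cosh r) * Real.exp (a*r) :=
    mul_le_mul_of_nonneg_left this (Real.exp_pos _).le
  simpa using h2

lemma cosh_mul_bound (ν : ℝ) : ∀ r : ℝ, 0 ≤ r → |Real.cosh (ν * r)| ≤ Real.exp (|ν| * r) := by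
  intro r hr
  rw [abs_of_pos (Real.cosh_pos _)]
  calc Real.cosh (ν * r) ≤ Real.exp |ν * r| := cosh_le_exp_abs _
    _ = Real.exp (|ν| * r) := by rw [abs_mul, abs_of_nonneg hr]

lemma integrableOn_besselK {z : ℝ} (hz : 0 < z) (ν : ℝ) :
    IntegrableOn (fun r => Real.exp (-z * Real.cosh r) * Real.cosh (ν * r)) (Ioi (0:ℝ)) :=
  integrable_exp_cosh_mul hz (by continuity) |ν| (cosh_mul_bound ν)

lemma cosh_cosh_bound (ν : ℝ) : ∀ r : ℝ, 0 ≤ r →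
    |Real.cosh r * Real.cosh (ν * r)| ≤ Real.exp ((1 + |ν|) * r) := by
  intro r hr
  rw [abs_mul]
  calc |Real.cosh r| * |Real.cosh (ν * r)| ≤ Real.exp (1 * r) * Real.exp (|ν| * r) := by
        apply mul_le_mul
        · rw [abs_of_pos (Real.cosh_pos _), one_mul]
          calc Real.cosh r ≤ Real.exp |r| := cosh_le_exp_abs r
            _ = Real.exp r := by rw [abs_of_nonneg hr]
        · exact cosh_mul_bound ν r hr
        · positivity
        · positivity
    _ = Real.exp ((1 + |ν|) * r) := by rw [← Real.exp_add]; ring_nf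

lemma integrableOn_besselL {z : ℝ} (hz : 0 < z) (ν : ℝ) :
    IntegrableOn (fun r => Real.exp (-z * Real.cosh r) * (Real.cosh r * Real.cosh (ν * r)))
      (Ioi (0:ℝ)) :=
  integrable_exp_cosh_mul hz (by continuity) (1 + |ν|) (cosh_cosh_bound ν)

lemma integrableOn_sinh_sinh {z : ℝ} (hz : 0 < z) (ν : ℝ) :
    IntegrableOn (fun r => Real.exp (-z * Real.cosh r) * (Real.sinh r * Real.sinh (ν * r)))
      (Ioi (0:ℝ)) := by
  refine integrable_exp_cosh_mul hz (by continuity) (1 + |ν|) (fun r hr => ?_)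
  rw [abs_mul]
  calc |Real.sinh r| * |Real.sinh (ν * r)| ≤ Real.exp |r| * Real.exp |ν * r| :=
        mul_le_mul (abs_sinh_le_exp_abs r) (abs_sinh_le_exp_abs _) (abs_nonneg _)
          (Real.exp_pos _).le
    _ = Real.exp ((1 + |ν|) * r) := by
        rw [← Real.exp_add, abs_mul, abs_of_nonneg hr]; ring_nf

/-- Differentiation under the integral sign for Bessel-type integrals. -/
lemma hasDerivAt_integral_cosh {f : ℝ → ℝ} (hf : Continuous f) (a : ℝ)
    (hb : ∀ r, 0 ≤ r → |f r| ≤ Real.exp (a * r)) {z : ℝ} (hz : 0 < z) :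
    HasDerivAt (fun w => ∫ r in Ioi (0:ℝ), Real.exp (-w * Real.cosh r) * f r)
      (-∫ r in Ioi (0:ℝ), Real.exp (-z * Real.cosh r) * (Real.cosh r * f r)) z := by
  have hz2 : 0 < z/2 := by linarith
  set F : ℝ → ℝ → ℝ := fun w r => Real.exp (-w * Real.cosh r) * f r with hF
  set F' : ℝ → ℝ → ℝ := fun w r => Real.exp (-w * Real.cosh r) * (-Real.cosh r) * f r with hF'
  set bound : ℝ → ℝ := fun r => Real.exp (-(z/2) * Real.cosh r) * (Real.cosh r * |f r|)
    with hbound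
  have hmeas : ∀ w : ℝ, AEStronglyMeasurable (F w) (volume.restrict (Ioi (0:ℝ))) := fun w =>
    Continuous.aestronglyMeasurable (by fun_prop)
  have h1 : ∀ᶠ w in 𝓝 z, AEStronglyMeasurable (F w) (volume.restrict (Ioi (0:ℝ))) :=
    Filter.Eventually.of_forall hmeas
  have h2 : Integrable (F z) (volume.restrict (Ioi (0:ℝ))) :=
    integrable_exp_cosh_mul hz hf a hb
  have h3 : AEStronglyMeasurable (F' z) (volume.restrict (Ioi (0:ℝ))) :=
    Continuous.aestronglyMeasurable (by fun_prop)
  have h4 : ∀ᵐ r ∂(volume.restrict (Ioi (0:ℝ))), ∀ w ∈ Metric.ball z (z/2),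
      ‖F' w r‖ ≤ bound r := by
    filter_upwards [ae_restrict_mem measurableSet_Ioi] with r _ w hw
    have hw2 : z/2 ≤ w := by
      rw [Metric.mem_ball, Real.dist_eq, abs_lt] at hw; linarith
    have hcp := Real.cosh_pos r
    have : Real.exp (-w * Real.cosh r) ≤ Real.exp (-(z/2) * Real.cosh r) := by
      apply Real.exp_le_exp.2; nlinarith
    rw [Real.norm_eq_abs, abs_mul, abs_mul, abs_of_nonneg (Real.exp_pos _).le,
      abs_neg, abs_of_pos hcp]
    calc Real.exp (-w * Real.cosh r) * Real.cosh r * |f r|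
        ≤ Real.exp (-(z/2) * Real.cosh r) * Real.cosh r * |f r| := by
          apply mul_le_mul_of_nonneg_right (mul_le_mul_of_nonneg_right this hcp.le)
            (abs_nonneg _)
      _ = bound r := by rw [hbound]; ring
  have h5 : Integrable bound (volume.restrict (Ioi (0:ℝ))) := by
    refine integrable_exp_cosh_mul hz2 (by fun_prop) (1 + a) (fun r hr => ?_)
    rw [abs_of_nonneg (by positivity)]
    calc Real.cosh r * |f r| ≤ Real.exp (1 * r) * Real.exp (a * r) := by
          apply mul_le_mul _ (hb r hr) (abs_nonneg _) (Real.exp_pos _).le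
          rw [one_mul]
          calc Real.cosh r ≤ Real.exp |r| := cosh_le_exp_abs r
            _ = Real.exp r := by rw [abs_of_nonneg hr]
      _ = Real.exp ((1 + a) * r) := by rw [← Real.exp_add]; ring_nf
  have h6 : ∀ᵐ r ∂(volume.restrict (Ioi (0:ℝ))), ∀ w ∈ Metric.ball z (z/2),
      HasDerivAt (fun w => F w r) (F' w r) w := by
    refine Filter.Eventually.of_forall (fun r w _ => ?_)
    have hd : HasDerivAt (fun w : ℝ => -w * Real.cosh r) (-Real.cosh r) w := by
      simpa using (hasDerivAt_id w).neg.mul_const (Real.cosh r)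
    simpa [hF, hF', mul_comm] using (hd.exp.mul_const (f r))
  have main := hasDerivAt_integral_of_dominated_loc_of_deriv_le (Metric.ball_mem_nhds z hz2) h1 h2 h3 h4 h5 h6
  have := main.2
  have heq : ∫ r in Ioi (0:ℝ), F' z r =
      -∫ r in Ioi (0:ℝ), Real.exp (-z * Real.cosh r) * (Real.cosh r * f r) := by
    rw [← integral_neg]
    apply setIntegral_congr_fun measurableSet_Ioi
    intro r _
    simp only [hF']; ring
  rwa [heq] at this

/-- Integration by parts: `ν K_ν(z) = z ∫ exp(-z cosh r) sinh r sinh (ν r)`. -/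
lemma ibp_besselK (ν : ℝ) {z : ℝ} (hz : 0 < z) :
    ν * besselK ν z =
      z * ∫ r in Ioi (0:ℝ), Real.exp (-z * Real.cosh r) * (Real.sinh r * Real.sinh (ν * r)) := by
  set F : ℝ → ℝ := fun r => Real.sinh (ν * r) * Real.exp (-z * Real.cosh r) with hFdef
  set F' : ℝ → ℝ := fun r =>
    ν * (Real.exp (-z * Real.cosh r) * Real.cosh (ν * r)) -
      z * (Real.exp (-z * Real.cosh r) * (Real.sinh r * Real.sinh (ν * r))) with hF'def
  have hderiv : ∀ r : ℝ, HasDerivAt F (F' r) r := by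
    intro r
    have h1 : HasDerivAt (fun r : ℝ => Real.sinh (ν * r)) (Real.cosh (ν * r) * ν) r := by
      simpa using ((hasDerivAt_id r).const_mul ν).sinh
    have h2 : HasDerivAt (fun r : ℝ => Real.exp (-z * Real.cosh r))
        (Real.exp (-z * Real.cosh r) * (-z * Real.sinh r)) r :=
      ((Real.hasDerivAt_cosh r).const_mul (-z)).exp
    have := h1.mul h2
    refine this.congr_deriv ?_
    simp only [hF'def]; ring
  have hint : IntegrableOn F' (Ioi (0:ℝ)) := by
    exact ((integrableOn_besselK hz ν).const_mul ν).sub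
      ((integrableOn_sinh_sinh hz ν).const_mul z)
  have htend : Tendsto F atTop (𝓝 0) := by
    obtain ⟨m, hm⟩ := exists_nat_gt |ν|
    set C : ℝ := m.factorial * ((z/2) ^ m)⁻¹ with hC
    have hCpos : 0 < C := by positivity
    have hb : ∀ᶠ r in atTop, |F r| ≤ C * Real.exp (-((m:ℝ) - |ν|) * r) := by
      filter_upwards [eventually_ge_atTop (0:ℝ)] with r hr
      rw [hFdef, abs_mul, abs_of_nonneg (Real.exp_pos _).le]
      calc |Real.sinh (ν * r)| * Real.exp (-z * Real.cosh r)
          ≤ Real.exp (|ν| * r) * (C * Real.exp (-(m:ℝ) * r)) := by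
            apply mul_le_mul _ (exp_neg_cosh_le hz m r) (Real.exp_pos _).le
              (Real.exp_pos _).le
            calc |Real.sinh (ν * r)| ≤ Real.exp |ν * r| := abs_sinh_le_exp_abs _
              _ = Real.exp (|ν| * r) := by rw [abs_mul, abs_of_nonneg hr]
        _ = C * Real.exp (-((m:ℝ) - |ν|) * r) := by
            rw [mul_comm, mul_assoc, ← Real.exp_add]; congr 1; ring
    have hb0 : Tendsto (fun r => C * Real.exp (-((m:ℝ) - |ν|) * r)) atTop (𝓝 0) := by
      rw [show (0:ℝ) = C * 0 by ring]
      apply Tendsto.const_mul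
      apply Real.tendsto_exp_atBot.comp
      apply Tendsto.const_mul_atTop_of_neg (by linarith : -((m:ℝ) - |ν|) < 0) tendsto_id
    exact squeeze_zero_norm' hb hb0
  have h0 : F 0 = 0 := by simp [hFdef]
  have key : ∫ r in Ioi (0:ℝ), F' r = 0 - F 0 :=
    MeasureTheory.integral_Ioi_of_hasDerivAt_of_tendsto' (fun x _ => hderiv x) hint htend
  rw [h0, sub_zero] at key
  have hsplit : ∫ r in Ioi (0:ℝ), F' r =
      ν * besselK ν z -
        z * ∫ r in Ioi (0:ℝ), Real.exp (-z * Real.cosh r) * (Real.sinh r * Real.sinh (ν * r)) := by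
    rw [hF'def, besselK]
    rw [integral_sub ((integrableOn_besselK hz ν).const_mul ν)
      ((integrableOn_sinh_sinh hz ν).const_mul z), integral_const_mul, integral_const_mul]
  rw [hsplit] at key
  linarith

/-- The companion integral `L_ν(z) = ∫ exp(-z cosh r) cosh r cosh (ν r)`. -/
noncomputable def besselL (ν z : ℝ) : ℝ :=
  ∫ r in Set.Ioi (0 : ℝ), Real.exp (-z * Real.cosh r) * (Real.cosh r * Real.cosh (ν * r))

lemma hasDerivAt_besselK (ν : ℝ) {z : ℝ} (hz : 0 < z) :
    HasDerivAt (besselK ν) (-(besselL ν z)) z := by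
  exact hasDerivAt_integral_cosh (by continuity) |ν| (cosh_mul_bound ν) hz

lemma hasDerivAt_besselL (ν : ℝ) {z : ℝ} (hz : 0 < z) :
    HasDerivAt (besselL ν)
      (-∫ r in Ioi (0:ℝ),
        Real.exp (-z * Real.cosh r) * (Real.cosh r * (Real.cosh r * Real.cosh (ν * r)))) z := by
  exact hasDerivAt_integral_cosh (by continuity) (1 + |ν|) (cosh_cosh_bound ν) hz

/-- Recurrence: `z L_ν(z) - ν K_ν(z) = z K_{ν-1}(z)`. -/
lemma besselL_recurrence (ν : ℝ) {z : ℝ} (hz : 0 < z) :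
    z * besselL ν z - ν * besselK ν z = z * besselK (ν - 1) z := by
  rw [ibp_besselK ν hz]
  rw [← mul_sub]
  congr 1
  rw [besselL, besselK,
    ← integral_sub (integrableOn_besselL hz ν) (integrableOn_sinh_sinh hz ν)]
  apply setIntegral_congr_fun measurableSet_Ioi
  intro r _
  have h : (ν - 1) * r = ν * r - r := by ring
  simp only [h, Real.cosh_sub]
  ring

/-- Derivative formula: `d/dz (z^p K_p(z)) = -z^p K_{p-1}(z)`. -/
lemma hasDerivAt_rpow_besselK (p : ℝ) {z : ℝ} (hz : 0 < z) :
    HasDerivAt (fun t : ℝ => t ^ p * besselK p t) (-(z ^ p * besselK (p - 1) z)) z := by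
  have h1 : HasDerivAt (fun t : ℝ => t ^ p) (p * z ^ (p - 1)) z :=
    Real.hasDerivAt_rpow_const (Or.inl hz.ne')
  have h2 := h1.mul (hasDerivAt_besselK p hz)
  have hzp : z ^ (p - 1) * z = z ^ p := by
    rw [← Real.rpow_add_one hz.ne']
    norm_num
  have hrec := besselL_recurrence p hz
  refine h2.congr_deriv ?_
  have key : z ^ p * besselL p z - p * (z ^ (p-1) * besselK p z) = z ^ p * besselK (p-1) z := by
    rw [← hzp]
    linear_combination z ^ (p-1) * hrec
  linear_combination -key

lemma integral_exp_neg_mul_Ioi {b : ℝ} (hb : 0 < b) (a : ℝ) :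
    ∫ x in Ioi a, Real.exp (-b * x) = Real.exp (-b * a) / b := by
  have hderiv : ∀ x ∈ Ici a, HasDerivAt (fun x => -Real.exp (-b * x) / b)
      (Real.exp (-b * x)) x := by
    intro x _
    have h : HasDerivAt (fun x : ℝ => -b * x) (-b) x := by
      simpa using (hasDerivAt_id x).const_mul (-b)
    have := (h.exp.neg).div_const b
    refine this.congr_deriv ?_
    field_simp
  have htend : Tendsto (fun x => -Real.exp (-b * x) / b) atTop (𝓝 0) := by
    rw [show (0:ℝ) = -0/b by simp]
    apply Tendsto.div_const
    apply Tendsto.neg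
    apply Real.tendsto_exp_atBot.comp
    exact Tendsto.const_mul_atTop_of_neg (by linarith) tendsto_id
  have := MeasureTheory.integral_Ioi_of_hasDerivAt_of_tendsto' hderiv
    (exp_neg_integrableOn_Ioi a hb) htend
  rw [this]; ring

lemma besselK_nonneg (ν : ℝ) {t : ℝ} : 0 ≤ besselK ν t := by
  apply setIntegral_nonneg measurableSet_Ioi
  intro r _
  positivity

/-- Small-argument bound. -/
lemma besselK_small_bound (ν q : ℝ) (hq : |ν| ≤ q) (hq0 : 0 < q) (m : ℕ) (hm : q < m)
    {t : ℝ} (ht : 0 < t) (ht2 : t < 2) :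
    besselK ν t ≤ (1/q + m.factorial/((m:ℝ)-q)) * (t/2) ^ (-q) := by
  set r₀ : ℝ := Real.log (2/t) with hr₀def
  have h2t : 1 < 2/t := by rw [lt_div_iff₀ ht]; linarith
  have hr₀ : 0 < r₀ := Real.log_pos h2t
  have ht2pos : 0 < t/2 := by linarith
  have hlog : Real.log (t/2) = -r₀ := by
    rw [hr₀def, show (2:ℝ)/t = (t/2)⁻¹ by field_simp, Real.log_inv]; ring
  have hexpr₀ : Real.exp (q * r₀) = (t/2) ^ (-q) := by
    rw [Real.rpow_def_of_pos ht2pos, hlog]; congr 1; ring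
  have hint1 : IntegrableOn (fun r => Real.exp (-t * Real.cosh r) * Real.cosh (ν * r))
      (Ioc (0:ℝ) r₀) := (integrableOn_besselK ht ν).mono_set Ioc_subset_Ioi_self
  have hint2 : IntegrableOn (fun r => Real.exp (-t * Real.cosh r) * Real.cosh (ν * r))
      (Ioi r₀) := (integrableOn_besselK ht ν).mono_set (Ioi_subset_Ioi hr₀.le)
  -- split the integral
  have hsplit : besselK ν t = (∫ r in Ioc (0:ℝ) r₀, Real.exp (-t * Real.cosh r) *
      Real.cosh (ν * r)) + ∫ r in Ioi r₀, Real.exp (-t * Real.cosh r) * Real.cosh (ν * r) := by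
    rw [besselK, ← Ioc_union_Ioi_eq_Ioi hr₀.le]
    rw [setIntegral_union (Ioc_disjoint_Ioi le_rfl) measurableSet_Ioi hint1 hint2]
  -- piece 1
  have hp1 : (∫ r in Ioc (0:ℝ) r₀, Real.exp (-t * Real.cosh r) * Real.cosh (ν * r)) ≤
      (t/2) ^ (-q) / q := by
    have hmono : (∫ r in Ioc (0:ℝ) r₀, Real.exp (-t * Real.cosh r) * Real.cosh (ν * r)) ≤
        ∫ r in Ioc (0:ℝ) r₀, Real.exp (q * r) := by
      apply setIntegral_mono_on
      · exact hint1
      · exact (Real.continuous_exp.comp (continuous_const.mul continuous_id)).integrableOn_Ioc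
      · exact measurableSet_Ioc
      · intro r hr
        have he1 : Real.exp (-t * Real.cosh r) ≤ 1 := by
          rw [← Real.exp_zero]
          apply Real.exp_le_exp.2
          nlinarith [Real.cosh_pos r]
        have he2 : Real.cosh (ν * r) ≤ Real.exp (q * r) := by
          have h3 : Real.cosh (ν * r) ≤ Real.exp (|ν| * r) := by
            rw [show |ν| * r = |ν * r| by rw [abs_mul, abs_of_nonneg hr.1.le]]
            exact cosh_le_exp_abs _
          refine h3.trans (Real.exp_le_exp.2 ?_)
          nlinarith [hr.1.le]
        have := mul_le_mul he1 he2 (Real.cosh_pos (ν * r)).le zero_le_one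
        rw [one_mul] at this
        exact this
    have hcalc : (∫ r in Ioc (0:ℝ) r₀, Real.exp (q * r)) ≤ (t/2) ^ (-q) / q := by
      rw [← intervalIntegral.integral_of_le hr₀.le]
      have : ∫ r in (0:ℝ)..r₀, Real.exp (q * r) = Real.exp (q * r₀)/q - Real.exp (q * 0)/q := by
        apply intervalIntegral.integral_eq_sub_of_hasDerivAt (f := fun x => Real.exp (q * x) / q)
        · intro x _
          have h : HasDerivAt (fun x : ℝ => q * x) q x := by
            simpa using (hasDerivAt_id x).const_mul q
          have := h.exp.div_const q
          refine this.congr_deriv ?_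
          field_simp
        · apply Continuous.intervalIntegrable; continuity
      rw [this, hexpr₀]
      have : 0 < Real.exp (q * 0) / q := by positivity
      linarith
    linarith
  -- piece 2
  have hp2 : (∫ r in Ioi r₀, Real.exp (-t * Real.cosh r) * Real.cosh (ν * r)) ≤
      (m.factorial/((m:ℝ)-q)) * (t/2) ^ (-q) := by
    set D : ℝ := m.factorial * (((t/2):ℝ) ^ (m:ℕ))⁻¹ with hD
    have hDpos : 0 < D := by positivity
    have hmono : (∫ r in Ioi r₀, Real.exp (-t * Real.cosh r) * Real.cosh (ν * r)) ≤
        ∫ r in Ioi r₀, D * Real.exp (-((m:ℝ) - q) * r) := by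
      apply setIntegral_mono_on
      · exact hint2
      · exact (exp_neg_integrableOn_Ioi r₀ (by linarith)).const_mul D
      · exact measurableSet_Ioi
      · intro r hr
        have hrpos : (0:ℝ) ≤ r := le_trans hr₀.le (le_of_lt hr)
        have he2 : Real.cosh (ν * r) ≤ Real.exp (q * r) := by
          have h3 : Real.cosh (ν * r) ≤ Real.exp (|ν| * r) := by
            rw [show |ν| * r = |ν * r| by rw [abs_mul, abs_of_nonneg hrpos]]
            exact cosh_le_exp_abs _
          refine h3.trans (Real.exp_le_exp.2 ?_)
          nlinarith
        have hstep := mul_le_mul (exp_neg_cosh_le ht m r) he2 (Real.cosh_pos (ν*r)).le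
          (by positivity : (0:ℝ) ≤ (m.factorial : ℝ) * (((t/2):ℝ)^(m:ℕ))⁻¹ * Real.exp (-(m:ℝ)*r))
        refine hstep.trans (le_of_eq ?_)
        rw [hD, mul_assoc, ← Real.exp_add]
        congr 2
        ring
    have hcalc : (∫ r in Ioi r₀, D * Real.exp (-((m:ℝ) - q) * r)) =
        D * (Real.exp (-((m:ℝ) - q) * r₀) / ((m:ℝ) - q)) := by
      rw [MeasureTheory.integral_const_mul, integral_exp_neg_mul_Ioi (by linarith)]
    have hexp2 : Real.exp (-((m:ℝ) - q) * r₀) = (t/2) ^ ((m:ℝ) - q) := by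
      rw [Real.rpow_def_of_pos ht2pos, hlog]
      congr 1
      ring
    have hfinal : D * ((t/2) ^ ((m:ℝ) - q) / ((m:ℝ) - q)) =
        (m.factorial/((m:ℝ)-q)) * (t/2) ^ (-q) := by
      have hmq : (((t/2):ℝ) ^ (m:ℕ)) = ((t/2):ℝ) ^ ((m:ℕ):ℝ) := by rw [Real.rpow_natCast]
      have hmul : ((t/2):ℝ) ^ ((m:ℝ) - q) = (t/2) ^ ((m:ℝ)) * (t/2) ^ (-q) := by
        rw [← Real.rpow_add ht2pos, sub_eq_add_neg]
      have hne : ((t/2):ℝ) ^ ((m:ℝ)) ≠ 0 := (Real.rpow_pos_of_pos ht2pos _).ne'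
      have hmne : ((m:ℝ) - q) ≠ 0 := by linarith
      rw [hD, hmq, hmul]
      field_simp
    calc (∫ r in Ioi r₀, Real.exp (-t * Real.cosh r) * Real.cosh (ν * r))
        ≤ D * (Real.exp (-((m:ℝ) - q) * r₀) / ((m:ℝ) - q)) := by rw [← hcalc]; exact hmono
      _ = (m.factorial/((m:ℝ)-q)) * (t/2) ^ (-q) := by rw [hexp2]; exact hfinal
  rw [hsplit]
  have : (1/q + m.factorial/((m:ℝ)-q)) * (t/2) ^ (-q) =
      (t/2) ^ (-q)/q + (m.factorial/((m:ℝ)-q)) * (t/2) ^ (-q) := by ring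
  rw [this]
  linarith

/-- `t^p K_{p-1}(t) → 0` as `t → 0⁺`, for `p > 1/2`. -/
lemma tendsto_rpow_besselK_sub_one (p : ℝ) (hp : 1/2 < p) :
    Tendsto (fun t => t ^ p * besselK (p - 1) t) (𝓝[>] (0:ℝ)) (𝓝 0) := by
  have hp0 : 0 < p := by linarith
  set q : ℝ := max |p - 1| (p/2) with hqdef
  have hq0 : 0 < q := lt_of_lt_of_le (by linarith : (0:ℝ) < p/2) (le_max_right _ _)
  have hqabs : |p - 1| ≤ q := le_max_left _ _
  have hqp : q < p := by
    apply max_lt _ (by linarith)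
    rw [abs_lt]; constructor <;> linarith
  set m : ℕ := Nat.ceil p + 1 with hmdef
  have hmq : q < m := by
    have h1 : p ≤ Nat.ceil p := Nat.le_ceil p
    have : (m:ℝ) = (Nat.ceil p : ℝ) + 1 := by exact_mod_cast rfl
    linarith
  set C : ℝ := 1/q + m.factorial/((m:ℝ)-q) with hCdef
  have hCpos : 0 < C := by
    have h1 : (0:ℝ) < 1/q := by positivity
    have h2 : (0:ℝ) < m.factorial/((m:ℝ)-q) := by
      apply div_pos (by exact_mod_cast m.factorial_pos) (by linarith)
    rw [hCdef]
    linarith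
  have hbound : ∀ t ∈ Ioo (0:ℝ) 2, t ^ p * besselK (p-1) t ≤ (C * 2 ^ q) * t ^ (p - q) := by
    intro t ht
    have h1 : besselK (p-1) t ≤ C * (t/2) ^ (-q) :=
      besselK_small_bound (p-1) q hqabs hq0 m hmq ht.1 ht.2
    have h2 : t ^ p * besselK (p-1) t ≤ t ^ p * (C * (t/2) ^ (-q)) := by
      apply mul_le_mul_of_nonneg_left h1 (Real.rpow_nonneg ht.1.le p)
    refine h2.trans (le_of_eq ?_)
    have e1 : ((t/2):ℝ) ^ (-q) = 2 ^ q * t ^ (-q) := by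
      rw [Real.div_rpow ht.1.le (by norm_num : (0:ℝ) ≤ 2),
        Real.rpow_neg (by norm_num : (0:ℝ) ≤ 2), div_inv_eq_mul, mul_comm]
    have e2 : t ^ (p - q) = t ^ p * t ^ (-q) := by
      rw [← Real.rpow_add ht.1, sub_eq_add_neg]
    rw [e1, e2]
    ring
  have hg : Tendsto (fun t : ℝ => (C * 2 ^ q) * t ^ (p - q)) (𝓝[>] (0:ℝ)) (𝓝 0) := by
    have hc : ContinuousAt (fun x : ℝ => x ^ (p - q)) 0 :=
      Real.continuousAt_rpow_const 0 (p - q) (Or.inr (by linarith))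
    have h5 : Tendsto (fun x : ℝ => x ^ (p - q)) (𝓝[>] (0:ℝ)) (𝓝 ((0:ℝ) ^ (p - q))) :=
      hc.tendsto.mono_left (nhdsWithin_le_nhds (s := Ioi (0:ℝ)))
    rw [Real.zero_rpow (by linarith : p - q ≠ 0)] at h5
    have h6 := h5.const_mul (C * 2 ^ q)
    simpa using h6
  apply squeeze_zero'
  · filter_upwards [self_mem_nhdsWithin] with t ht
    exact mul_nonneg (Real.rpow_nonneg (le_of_lt ht) p) (besselK_nonneg (p-1))
  · filter_upwards [Ioo_mem_nhdsGT_of_mem (by norm_num : (0:ℝ) ∈ Ico (0:ℝ) 2)] with t ht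
    exact hbound t ht
  · exact hg

lemma besselK_pos (ν : ℝ) {z : ℝ} (hz : 0 < z) : 0 < besselK ν z := by
  rw [besselK]
  rw [setIntegral_pos_iff_support_of_nonneg_ae]
  · have : (Function.support fun r => Real.exp (-z * Real.cosh r) * Real.cosh (ν * r)) = univ := by
      ext r
      simp only [Function.mem_support, mem_univ, iff_true]
      positivity
    rw [this]
    simp [Real.volume_Ioi]
  · filter_upwards [] with r
    positivity
  · exact integrableOn_besselK hz ν

lemma besselK_decay (ν : ℝ) {T : ℝ} (hT : 1 ≤ T) :
    besselK ν T ≤ Real.exp (-(T-1)) * besselK ν 1 := by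
  have hTpos : 0 < T := by linarith
  rw [besselK, besselK, ← MeasureTheory.integral_const_mul]
  apply setIntegral_mono_on (integrableOn_besselK hTpos ν)
    (((integrableOn_besselK one_pos ν).const_mul _)) measurableSet_Ioi
  intro r _
  rw [← mul_assoc, ← Real.exp_add]
  apply mul_le_mul_of_nonneg_right _ (Real.cosh_pos _).le
  apply Real.exp_le_exp.2
  nlinarith [Real.one_le_cosh r]

theorem matern_not_completely_monotone (p : ℝ) (hp : 1 / 2 < p) :
    ¬ (∀ (k : ℕ) (t : ℝ), 0 < t →
      0 ≤ (-1 : ℝ) ^ k * iteratedDeriv k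
        (fun r : ℝ => r ^ p * besselK p r / (2 ^ (p - 1) * Real.Gamma p)) t) := by
  intro H
  have hp0 : 0 < p := by linarith
  set C : ℝ := 2 ^ (p - 1) * Real.Gamma p with hCdef
  have hC : 0 < C := by
    apply mul_pos (Real.rpow_pos_of_pos (by norm_num) _) (Real.Gamma_pos_of_pos hp0)
  set g : ℝ → ℝ := fun r : ℝ => r ^ p * besselK p r / (2 ^ (p - 1) * Real.Gamma p) with hgdef
  set φ : ℝ → ℝ := fun z => -(z ^ p * besselK (p - 1) z) / C with hφdef
  -- derivative of g
  have hgd : ∀ z : ℝ, 0 < z → HasDerivAt g (φ z) z := fun z hz =>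
    (hasDerivAt_rpow_besselK p hz).div_const C
  have hderiv_eq : ∀ z : ℝ, 0 < z → deriv g z = φ z := fun z hz => (hgd z hz).deriv
  -- sign conditions from complete monotonicity
  have h1 : ∀ t : ℝ, 0 < t → deriv g t ≤ 0 := by
    intro t ht
    have := H 1 t ht
    rw [iteratedDeriv_one] at this
    simpa using (by linarith [this] : -deriv g t ≥ 0)
  have h2 : ∀ t : ℝ, 0 < t → 0 ≤ deriv (deriv g) t := by
    intro t ht
    have := H 2 t ht
    rw [iteratedDeriv_succ, iteratedDeriv_one] at this
    simpa using this
  -- differentiability of deriv g on (0,∞)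
  have hφdiff : ∀ z : ℝ, 0 < z → DifferentiableAt ℝ φ z := by
    intro z hz
    have hd1 : HasDerivAt (fun t : ℝ => t ^ p) (p * z ^ (p - 1)) z :=
      Real.hasDerivAt_rpow_const (Or.inl hz.ne')
    have hd2 := hasDerivAt_besselK (p - 1) hz
    exact (((hd1.mul hd2).neg).div_const C).differentiableAt
  have hdg_diff : ∀ z : ℝ, 0 < z → DifferentiableAt ℝ (deriv g) z := by
    intro z hz
    have hev : deriv g =ᶠ[𝓝 z] φ :=
      Filter.eventuallyEq_of_mem (Ioi_mem_nhds hz) (fun x hx => hderiv_eq x hx)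
    exact (hφdiff z hz).congr_of_eventuallyEq hev
  -- deriv g is monotone on (0,∞)
  have hmono : MonotoneOn (deriv g) (Ioi (0:ℝ)) := by
    apply monotoneOn_of_deriv_nonneg (convex_Ioi 0)
    · exact fun z hz => (hdg_diff z hz).continuousAt.continuousWithinAt
    · rw [interior_Ioi]
      exact fun z hz => (hdg_diff z hz).differentiableWithinAt
    · rw [interior_Ioi]
      exact fun z hz => h2 z hz
  -- deriv g tends to 0 at 0⁺
  have htend0 : Tendsto (deriv g) (𝓝[>] (0:ℝ)) (𝓝 0) := by
    have hφt : Tendsto φ (𝓝[>] (0:ℝ)) (𝓝 0) := by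
      have := (tendsto_rpow_besselK_sub_one p hp).neg.div_const C
      simpa using this
    apply hφt.congr'
    filter_upwards [self_mem_nhdsWithin] with x hx
    exact (hderiv_eq x hx).symm
  -- deriv g is nonneg, hence zero
  have h3 : ∀ t : ℝ, 0 < t → 0 ≤ deriv g t := by
    intro t ht
    apply le_of_tendsto htend0
    filter_upwards [Ioo_mem_nhdsGT_of_mem (show (0:ℝ) ∈ Ico (0:ℝ) t from ⟨le_refl 0, ht⟩)]
      with s hs
    exact hmono (mem_Ioi.2 hs.1) (mem_Ioi.2 ht) hs.2.le
  have hzero : ∀ t : ℝ, 0 < t → deriv g t = 0 := fun t ht => le_antisymm (h1 t ht) (h3 t ht)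
  -- g is constant on (0,∞)
  have hgc : ContinuousOn g (Ioi (0:ℝ)) :=
    fun z hz => ((hgd z hz).differentiableAt).continuousAt.continuousWithinAt
  have hgdiff : DifferentiableOn ℝ g (interior (Ioi (0:ℝ))) := by
    rw [interior_Ioi]
    exact fun z hz => ((hgd z hz).differentiableAt).differentiableWithinAt
  have hgmono : MonotoneOn g (Ioi (0:ℝ)) := by
    apply monotoneOn_of_deriv_nonneg (convex_Ioi 0) hgc hgdiff
    rw [interior_Ioi]
    exact fun z hz => le_of_eq (hzero z hz).symm
  have hganti : AntitoneOn g (Ioi (0:ℝ)) := by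
    apply antitoneOn_of_deriv_nonpos (convex_Ioi 0) hgc hgdiff
    rw [interior_Ioi]
    exact fun z hz => le_of_eq (hzero z hz)
  have hconst : ∀ T : ℝ, 1 ≤ T → g T = g 1 := by
    intro T hT
    have h1T : (1:ℝ) ∈ Ioi (0:ℝ) := by norm_num
    have hTT : T ∈ Ioi (0:ℝ) := by simp only [mem_Ioi]; linarith
    exact le_antisymm (hganti h1T hTT hT) (hgmono h1T hTT hT)
  -- g 1 > 0
  have hg1 : 0 < g 1 := by
    rw [hgdef]
    simp only [Real.one_rpow, one_mul]
    exact div_pos (besselK_pos p one_pos) hC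
  -- decay of g at infinity
  have hdecay : ∀ T : ℝ, 1 ≤ T →
      g T ≤ (T ^ p * Real.exp (-T)) * (Real.exp 1 * besselK p 1 / C) := by
    intro T hT
    have hTpos : 0 < T := by linarith
    have hb := besselK_decay p hT
    have hTp : (0:ℝ) ≤ T ^ p := Real.rpow_nonneg hTpos.le p
    have : T ^ p * besselK p T ≤ T ^ p * (Real.exp (-(T-1)) * besselK p 1) :=
      mul_le_mul_of_nonneg_left hb hTp
    rw [hgdef]
    simp only []
    rw [div_le_iff₀ hC] at *
    calc T ^ p * besselK p T ≤ T ^ p * (Real.exp (-(T-1)) * besselK p 1) := this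
      _ = T ^ p * Real.exp (-T) * (Real.exp 1 * besselK p 1 / C) * C := by
          rw [show Real.exp (-(T-1)) = Real.exp (-T) * Real.exp 1 by
            rw [← Real.exp_add]; congr 1; ring]
          field_simp
  -- contradiction
  have htends : Tendsto (fun T : ℝ => (T ^ p * Real.exp (-T)) *
      (Real.exp 1 * besselK p 1 / C)) atTop (𝓝 0) := by
    have h0 := tendsto_rpow_mul_exp_neg_mul_atTop_nhds_zero p 1 one_pos
    simp only [neg_mul, one_mul] at h0
    have := h0.mul_const (Real.exp 1 * besselK p 1 / C)
    simpa using this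
  have hev : ∀ᶠ T in atTop, (T ^ p * Real.exp (-T)) *
      (Real.exp 1 * besselK p 1 / C) < g 1 :=
    Filter.Tendsto.eventually_lt_const hg1 htends
  obtain ⟨T, hT1, hTlt⟩ := ((eventually_ge_atTop (1:ℝ)).and hev).exists
  have heq := hconst T hT1
  have hle := hdecay T hT1
  rw [heq] at hle
  linarith
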